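/- Let f : ℝⁿ → ℝ (n ≥ 1) be continuous, let p ∈ ℝⁿ and ε > 0, and suppose the restriction of f to the closed ball B̄(p, ε) is convex. Let κ : ℝⁿ → ℝ be a nonnegative integrable function with ∫ κ = 1 supported in the closed ball B̄(0, ε/2), and set F(x) = ∫_{ℝⁿ} f(x + u)·κ(u) du. Then for every w ∈ ℝⁿ with ‖w‖ ≤ ε/2, the midpoint convexity inequality F(p + w) + F(p − w) ≥ 2·F(p) holds. -/

import Mathlib

open MeasureTheory

/-- Midpoint convexity of the convolution: if `f` is continuous and convex
on the closed ball `B̄(p, ε)`, and `κ` is a nonnegative probability kernel supported in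
`B̄(0, ε/2)`, then `F(x) = ∫ f(x + u)·κ(u) du` satisfies `F(p + w) + F(p − w) ≥ 2·F(p)` for
every `w` with `‖w‖ ≤ ε/2`. -/
theorem gw_convolution_midpoint_convexity
    (n : ℕ) (hn : 1 ≤ n) (ε : ℝ) (hε : 0 < ε)
    (p : EuclideanSpace ℝ (Fin n))
    (f : EuclideanSpace ℝ (Fin n) → ℝ) (hf_cont : Continuous f)
    (hf_conv : ConvexOn ℝ (Metric.closedBall p ε) f)
    (κ : EuclideanSpace ℝ (Fin n) → ℝ)
    (hκ_nonneg : ∀ u, 0 ≤ κ u)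
    (hκ_int : Integrable κ)
    (hκ_mass : ∫ u, κ u = 1)
    (hκ_supp : Function.support κ ⊆ Metric.closedBall 0 (ε / 2))
    (F : EuclideanSpace ℝ (Fin n) → ℝ)
    (hF : ∀ x, F x = ∫ u, f (x + u) * κ u)
    (w : EuclideanSpace ℝ (Fin n)) (hw : ‖w‖ ≤ ε / 2) :
    F (p + w) + F (p - w) ≥ 2 * F p := by
  set s := Metric.closedBall (0 : EuclideanSpace ℝ (Fin n)) (ε / 2) with hs_def
  have hs : IsCompact s := ProperSpace.isCompact_closedBall _ _
  have key : ∀ x : EuclideanSpace ℝ (Fin n),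
      Integrable (fun u => f (x + u) * κ u) := by
    intro x
    have hcont : Continuous (fun u : EuclideanSpace ℝ (Fin n) => f (x + u)) :=
      hf_cont.comp (continuous_const.add continuous_id)
    obtain ⟨C, hC⟩ := hs.exists_bound_of_continuousOn hcont.continuousOn
    have heq : (fun u => f (x + u) * κ u)
        = fun u => s.indicator (fun u => f (x + u)) u * κ u := by
      funext u
      by_cases hu : κ u = 0
      · simp [hu]
      · rw [Set.indicator_of_mem (hκ_supp (Function.mem_support.2 hu))]
    rw [heq]
    apply hκ_int.bdd_mul (c := max C 0)
    · exact (hcont.measurable.indicator hs.measurableSet).aestronglyMeasurable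
    · refine Filter.Eventually.of_forall (fun u => ?_)
      by_cases hu : u ∈ s
      · rw [Set.indicator_of_mem hu]
        exact (hC u hu).trans (le_max_left _ _)
      · rw [Set.indicator_of_notMem hu]
        simp [le_max_right]
  have hpoint : ∀ u, 2 * (f (p + u) * κ u)
      ≤ f (p + w + u) * κ u + f (p - w + u) * κ u := by
    intro u
    by_cases hu : κ u = 0
    · simp [hu]
    · have hus : u ∈ s := hκ_supp (Function.mem_support.2 hu)
      have hnu : ‖u‖ ≤ ε / 2 := by
        simpa [hs_def] using hus
      have h1 : p + w + u ∈ Metric.closedBall p ε := by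
        rw [Metric.mem_closedBall, dist_eq_norm]
        have : p + w + u - p = w + u := by abel
        rw [this]
        calc ‖w + u‖ ≤ ‖w‖ + ‖u‖ := norm_add_le _ _
          _ ≤ ε / 2 + ε / 2 := add_le_add hw hnu
          _ = ε := by ring
      have h2 : p - w + u ∈ Metric.closedBall p ε := by
        rw [Metric.mem_closedBall, dist_eq_norm]
        have : p - w + u - p = -w + u := by abel
        rw [this]
        calc ‖-w + u‖ ≤ ‖-w‖ + ‖u‖ := norm_add_le _ _
          _ ≤ ε / 2 + ε / 2 := by rw [norm_neg]; exact add_le_add hw hnu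
          _ = ε := by ring
      have hcomb : (1/2 : ℝ) • (p + w + u) + (1/2 : ℝ) • (p - w + u) = p + u := by
        module
      have hconv := hf_conv.2 h1 h2 (by norm_num : (0:ℝ) ≤ 1/2)
        (by norm_num : (0:ℝ) ≤ 1/2) (by norm_num : (1/2 : ℝ) + 1/2 = 1)
      rw [hcomb] at hconv
      simp only [smul_eq_mul] at hconv
      have := mul_le_mul_of_nonneg_right hconv (hκ_nonneg u)
      nlinarith [this]
  rw [hF, hF, hF, ge_iff_le,
    ← integral_add (key (p + w)) (key (p - w)), ← integral_const_mul]
  exact integral_mono ((key p).const_mul 2) ((key (p + w)).add (key (p - w))) hpoint
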